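/- For every nonzero x ∈ ℝⁿ one has (1 − λ₁/λ(x)) ≤ sin² ∠_A(u₁, x) ≤ δ·(1 − λ₁/λ(x)). -/

import Mathlib

open Matrix Real

/-- Euclidean inner product weighted by the matrix `A`: `⟨x,y⟩_A = ⟨Ax,y⟩`. -/
noncomputable def ipA {n : ℕ} (A : Matrix (Fin n) (Fin n) ℝ) (x y : Fin n → ℝ) : ℝ :=
  A.mulVec x ⬝ᵥ y

/-- The `A`-norm `‖x‖_A = √⟨Ax,x⟩`. -/
noncomputable def normA {n : ℕ} (A : Matrix (Fin n) (Fin n) ℝ) (x : Fin n → ℝ) : ℝ :=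
  Real.sqrt (ipA A x x)

/-- The `A`-angle `∠_A(u,x) ∈ [0,π]`. -/
noncomputable def angleA {n : ℕ} (A : Matrix (Fin n) (Fin n) ℝ) (u x : Fin n → ℝ) : ℝ :=
  Real.arccos (ipA A u x / (normA A u * normA A x))

/-- The generalized Rayleigh quotient `λ(x) = ⟨Ax,x⟩/⟨Ex,x⟩`. -/
noncomputable def rayleigh {n : ℕ} (A E : Matrix (Fin n) (Fin n) ℝ) (x : Fin n → ℝ) : ℝ :=
  (A.mulVec x ⬝ᵥ x) / (E.mulVec x ⬝ᵥ x)

/-- The residual `r(x) = Ax − λ(x)·Ex`. -/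
noncomputable def residualA {n : ℕ} (A E : Matrix (Fin n) (Fin n) ℝ) (x : Fin n → ℝ) :
    Fin n → ℝ :=
  A.mulVec x - rayleigh A E x • E.mulVec x

/-- The normalized residual `ρ(x) = ‖r(x)‖_{A⁻¹} / ‖x‖_A`. -/
noncomputable def rhoRes {n : ℕ} (A E : Matrix (Fin n) (Fin n) ℝ) (x : Fin n → ℝ) : ℝ :=
  Real.sqrt (A⁻¹.mulVec (residualA A E x) ⬝ᵥ residualA A E x) / normA A x


open scoped MatrixOrder in
lemma key_bound {n : ℕ} (A E : Matrix (Fin n) (Fin n) ℝ) (hA : A.PosDef) (hE : E.PosDef)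
    (lam1 lam2 : ℝ) (u1 : Fin n → ℝ)
    (h1pos : 0 < lam1) (h2pos : 0 < lam2)
    (hsimple : ∀ v : Fin n → ℝ, A.mulVec v = lam1 • E.mulVec v → ∃ c : ℝ, v = c • u1)
    (hmin : ∀ μ : ℝ, (∃ v : Fin n → ℝ, v ≠ 0 ∧ A.mulVec v = μ • E.mulVec v) →
      μ = lam1 ∨ lam2 ≤ μ)
    (w : Fin n → ℝ) (hw : A.mulVec u1 ⬝ᵥ w = 0) :
    lam2 * (E.mulVec w ⬝ᵥ w) ≤ A.mulVec w ⬝ᵥ w := by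
  classical
  set B := CFC.sqrt A with hBdef
  have hBps : B.PosSemidef := (CFC.sqrt_nonneg A).posSemidef
  have hBB : B * B = A := CFC.sqrt_mul_sqrt_self A hA.posSemidef.nonneg
  have hBT : Bᵀ = B := by
    have := hBps.isHermitian
    simpa [Matrix.IsHermitian, Matrix.conjTranspose_eq_transpose_of_trivial] using this
  have hdetB : IsUnit B.det := by
    have hdA : A.det ≠ 0 := ne_of_gt hA.det_pos
    rw [← hBB, Matrix.det_mul] at hdA
    exact isUnit_iff_ne_zero.mpr (fun h => hdA (by rw [h, mul_zero]))
  have hB1 : B⁻¹ * B = 1 := Matrix.nonsing_inv_mul B hdetB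
  have hB2 : B * B⁻¹ = 1 := Matrix.mul_nonsing_inv B hdetB
  have hBiT : B⁻¹ᵀ = B⁻¹ := by rw [Matrix.transpose_nonsing_inv, hBT]
  set S := B⁻¹ * E * B⁻¹ with hSdef
  have hS : S.IsHermitian := by
    have h := hE.posSemidef.mul_mul_conjTranspose_same B⁻¹
    have hc : B⁻¹ᴴ = B⁻¹ := by simpa [Matrix.conjTranspose_eq_transpose_of_trivial] using hBiT
    rw [hc] at h
    exact h.isHermitian
  have hm1 : B * S = E * B⁻¹ := by
    rw [hSdef, ← mul_assoc, ← mul_assoc, hB2, Matrix.one_mul]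
  have hm2 : A * B⁻¹ = B := by rw [← hBB, mul_assoc, hB2, Matrix.mul_one]
  have hAT : Aᵀ = A := by
    have := hA.isHermitian
    simpa [Matrix.IsHermitian, Matrix.conjTranspose_eq_transpose_of_trivial] using this
  have hsd : ∀ (M : Matrix (Fin n) (Fin n) ℝ), Mᵀ = M → ∀ a b : Fin n → ℝ,
      (M *ᵥ a) ⬝ᵥ b = a ⬝ᵥ (M *ᵥ b) := by
    intro M hM a b
    conv_lhs => rw [← Matrix.vecMul_transpose]
    rw [hM, ← Matrix.dotProduct_mulVec]
  have hsumdot : ∀ (f : Fin n → Fin n → ℝ) (v : Fin n → ℝ),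
      (∑ i, f i) ⬝ᵥ v = ∑ i, f i ⬝ᵥ v := by
    intro f v
    simp only [dotProduct, Finset.sum_apply, Finset.sum_mul]
    exact Finset.sum_comm
  -- eigen decomposition facts
  set p : Fin n → Fin n → ℝ := fun i => ⇑(hS.eigenvectorBasis i) with hp
  set ν : Fin n → ℝ := hS.eigenvalues with hν
  have hpe : ∀ i, S *ᵥ p i = ν i • p i := fun i => hS.mulVec_eigenvectorBasis i
  have hpne : ∀ i, p i ≠ 0 := by
    intro i h
    exact hS.eigenvectorBasis.orthonormal.ne_zero i (by ext j; exact congrFun h j)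
  -- each eigenvector: either multiple of B *ᵥ u1 or eigenvalue ≤ lam2⁻¹
  have halt : ∀ i, (∃ c : ℝ, p i = c • (B *ᵥ u1)) ∨ ν i ≤ lam2⁻¹ := by
    intro i
    set v : Fin n → ℝ := B⁻¹ *ᵥ p i with hv
    have hBv : B *ᵥ v = p i := by
      rw [hv, Matrix.mulVec_mulVec, hB2, Matrix.one_mulVec]
    have hvne : v ≠ 0 := by
      intro h0
      apply hpne i
      rw [← hBv, h0, Matrix.mulVec_zero]
    have hEv : E *ᵥ v = ν i • (A *ᵥ v) := by
      have h2 : B *ᵥ (S *ᵥ p i) = ν i • (B *ᵥ p i) := by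
        rw [hpe i, Matrix.mulVec_smul]
      have h3 : B *ᵥ (S *ᵥ p i) = E *ᵥ v := by
        rw [Matrix.mulVec_mulVec, hm1, ← Matrix.mulVec_mulVec]
      have h4 : B *ᵥ p i = A *ᵥ v := by
        rw [hv, Matrix.mulVec_mulVec, hm2]
      rw [← h3, h2, h4]
    have hApos : 0 < v ⬝ᵥ (A *ᵥ v) := by
      have := hA.dotProduct_mulVec_pos hvne
      simpa using this
    have hEpos : 0 < v ⬝ᵥ (E *ᵥ v) := by
      have := hE.dotProduct_mulVec_pos hvne
      simpa using this
    have hνpos : 0 < ν i := by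
      have h5 : v ⬝ᵥ (E *ᵥ v) = ν i * (v ⬝ᵥ (A *ᵥ v)) := by
        rw [hEv, dotProduct_smul, smul_eq_mul]
      nlinarith
    have hAv : A *ᵥ v = (ν i)⁻¹ • (E *ᵥ v) := by
      rw [hEv, smul_smul, inv_mul_cancel₀ (ne_of_gt hνpos), one_smul]
    rcases hmin (ν i)⁻¹ ⟨v, hvne, hAv⟩ with h | h
    · left
      obtain ⟨c, hc⟩ := hsimple v (by rw [hAv, h])
      exact ⟨c, by rw [← hBv, hc, Matrix.mulVec_smul]⟩
    · right
      rw [← inv_inv (ν i)]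
      exact inv_anti₀ h2pos h
  -- now the quadratic form bound
  set y : Fin n → ℝ := B *ᵥ w with hy
  have hyu : (B *ᵥ u1) ⬝ᵥ y = 0 := by
    rw [hy, hsd B hBT, Matrix.mulVec_mulVec, hBB, ← hsd A hAT, hw]
  set c : Fin n → ℝ := fun i => p i ⬝ᵥ y with hc
  have hrepr : ∑ i, c i • p i = y := by
    have h := congrArg WithLp.ofLp (hS.eigenvectorBasis.sum_repr' (WithLp.toLp 2 y))
    simpa [WithLp.ofLp_sum, EuclideanSpace.inner_eq_star_dotProduct, hc, hp,
      dotProduct_comm] using h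
  have hSy : S *ᵥ y ⬝ᵥ y = ∑ i, ν i * (c i)^2 := by
    conv_lhs => rw [← hrepr]
    rw [show S *ᵥ (∑ i, c i • p i) = ∑ i, (c i * ν i) • p i by
      rw [← Matrix.mulVecLin_apply, map_sum]
      refine Finset.sum_congr rfl fun i _ => ?_
      rw [LinearMap.map_smul, Matrix.mulVecLin_apply, hpe i, smul_smul]]
    rw [hsumdot]
    refine Finset.sum_congr rfl fun i _ => ?_
    rw [smul_dotProduct, smul_eq_mul]
    rw [hrepr]
    show (c i * ν i) * (p i ⬝ᵥ y) = ν i * c i ^ 2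
    rw [show p i ⬝ᵥ y = c i from rfl]
    ring
  have hyy : y ⬝ᵥ y = ∑ i, (c i)^2 := by
    conv_lhs => rw [← hrepr]
    rw [hsumdot]
    refine Finset.sum_congr rfl fun i _ => ?_
    rw [smul_dotProduct, smul_eq_mul, hrepr]
    show c i * (p i ⬝ᵥ y) = c i ^ 2
    rw [show p i ⬝ᵥ y = c i from rfl]
    ring
  have hterm : ∀ i, ν i * (c i)^2 ≤ lam2⁻¹ * (c i)^2 := by
    intro i
    rcases halt i with ⟨d, hd⟩ | h
    · have : c i = 0 := by
        rw [hc]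
        simp only [hd, smul_dotProduct, hyu, smul_eq_mul, mul_zero]
      rw [this]
      simp
    · have := sq_nonneg (c i)
      nlinarith
  have hsum : S *ᵥ y ⬝ᵥ y ≤ lam2⁻¹ * (y ⬝ᵥ y) := by
    rw [hSy, hyy, Finset.mul_sum]
    exact Finset.sum_le_sum fun i _ => hterm i
  -- translate back to w
  have hSy' : S *ᵥ y = B⁻¹ *ᵥ (E *ᵥ w) := by
    rw [hy, Matrix.mulVec_mulVec, hSdef, mul_assoc, hB1, Matrix.mul_one,
      ← Matrix.mulVec_mulVec]
  have hSyw : S *ᵥ y ⬝ᵥ y = E *ᵥ w ⬝ᵥ w := by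
    rw [hSy', hy, hsd B⁻¹ hBiT (E *ᵥ w), Matrix.mulVec_mulVec, hB1, Matrix.one_mulVec]
  have hyyw : y ⬝ᵥ y = A *ᵥ w ⬝ᵥ w := by
    rw [hy, hsd B hBT, Matrix.mulVec_mulVec, hBB, ← hsd A hAT]
  rw [← hSyw, ← hyyw]
  calc lam2 * (S *ᵥ y ⬝ᵥ y) ≤ lam2 * (lam2⁻¹ * (y ⬝ᵥ y)) := by
        exact mul_le_mul_of_nonneg_left hsum (le_of_lt h2pos)
    _ = y ⬝ᵥ y := by field_simp

lemma dot_symm' {n : ℕ} (M : Matrix (Fin n) (Fin n) ℝ) (hM : Mᵀ = M) (a b : Fin n → ℝ) :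
    (M *ᵥ a) ⬝ᵥ b = a ⬝ᵥ (M *ᵥ b) := by
  conv_lhs => rw [← Matrix.vecMul_transpose]
  rw [hM, ← Matrix.dotProduct_mulVec]

/-- Proposition `raylangleb`, first part: two-sided bound of the squared `A`-angle
between `x` and the first generalized eigenvector in terms of the Rayleigh quotient. -/
theorem sin_sq_angle_rayleigh_bounds
    {n : ℕ} (hn : 1 ≤ n)
    (A E : Matrix (Fin n) (Fin n) ℝ) (hA : A.PosDef) (hE : E.PosDef)
    (lam1 lam2 : ℝ) (u1 : Fin n → ℝ)
    (hu1 : A.mulVec u1 = lam1 • E.mulVec u1) (hu1ne : u1 ≠ 0) (hu1norm : normA A u1 = 1)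
    (h1pos : 0 < lam1) (h12 : lam1 < lam2)
    (hsimple : ∀ v : Fin n → ℝ, A.mulVec v = lam1 • E.mulVec v → ∃ c : ℝ, v = c • u1)
    (hlam2 : ∃ v : Fin n → ℝ, v ≠ 0 ∧ A.mulVec v = lam2 • E.mulVec v)
    (hmin : ∀ μ : ℝ, (∃ v : Fin n → ℝ, v ≠ 0 ∧ A.mulVec v = μ • E.mulVec v) →
      μ = lam1 ∨ lam2 ≤ μ)
    (δ : ℝ) (hδ : δ ≥ lam2 / (lam2 - lam1))
    (x : Fin n → ℝ) (hx : x ≠ 0) :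
    1 - lam1 / rayleigh A E x ≤ Real.sin (angleA A u1 x) ^ 2 ∧
      Real.sin (angleA A u1 x) ^ 2 ≤ δ * (1 - lam1 / rayleigh A E x) := by
  classical
  have h2pos : 0 < lam2 := lt_trans h1pos h12
  have hAT : Aᵀ = A := by
    have := hA.isHermitian
    simpa [Matrix.IsHermitian, Matrix.conjTranspose_eq_transpose_of_trivial] using this
  have hET : Eᵀ = E := by
    have := hE.isHermitian
    simpa [Matrix.IsHermitian, Matrix.conjTranspose_eq_transpose_of_trivial] using this
  -- basic positivity
  have hP : 0 < A.mulVec x ⬝ᵥ x := by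
    have := hA.dotProduct_mulVec_pos hx
    rw [dotProduct_comm]
    simpa using this
  have hQ : 0 < E.mulVec x ⬝ᵥ x := by
    have := hE.dotProduct_mulVec_pos hx
    rw [dotProduct_comm]
    simpa using this
  have h11 : A.mulVec u1 ⬝ᵥ u1 = 1 := by
    have hpos : 0 < A.mulVec u1 ⬝ᵥ u1 := by
      have := hA.dotProduct_mulVec_pos hu1ne
      rw [dotProduct_comm]
      simpa using this
    have h := hu1norm
    rw [normA] at h
    have : ipA A u1 u1 = 1 := by
      have := Real.sq_sqrt (le_of_lt hpos : (0:ℝ) ≤ ipA A u1 u1)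
      rw [h] at this
      simpa using this.symm
    exact this
  set cc : ℝ := A.mulVec u1 ⬝ᵥ x with hccdef
  set w : Fin n → ℝ := x - cc • u1 with hwdef
  have hAu1w : A.mulVec u1 ⬝ᵥ w = 0 := by
    rw [hwdef, dotProduct_sub, dotProduct_smul, smul_eq_mul, h11, mul_one]
    exact sub_self cc
  have hxdec : x = w + cc • u1 := by rw [hwdef]; abel
  set W2 : ℝ := A.mulVec w ⬝ᵥ w with hW2def
  set EW : ℝ := E.mulVec w ⬝ᵥ w with hEWdef
  have hW2 : 0 ≤ W2 := by
    have := hA.posSemidef.dotProduct_mulVec_nonneg w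
    rw [hW2def, dotProduct_comm]
    simpa using this
  have hEW : 0 ≤ EW := by
    have := hE.posSemidef.dotProduct_mulVec_nonneg w
    rw [hEWdef, dotProduct_comm]
    simpa using this
  have hcross : A.mulVec w ⬝ᵥ u1 = 0 := by
    rw [dot_symm' A hAT, dotProduct_comm]
    exact hAu1w
  have hE1 : E.mulVec u1 = lam1⁻¹ • A.mulVec u1 := by
    rw [hu1, smul_smul, inv_mul_cancel₀ (ne_of_gt h1pos), one_smul]
  have hEu1w : E.mulVec u1 ⬝ᵥ w = 0 := by
    rw [hE1, smul_dotProduct, hAu1w, smul_zero]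
  have hEwu1 : E.mulVec w ⬝ᵥ u1 = 0 := by
    rw [dot_symm' E hET, dotProduct_comm]
    exact hEu1w
  have hE11 : E.mulVec u1 ⬝ᵥ u1 = lam1⁻¹ := by
    rw [hE1, smul_dotProduct, h11, smul_eq_mul, mul_one]
  -- expansions
  have hP2 : A.mulVec x ⬝ᵥ x = W2 + cc ^ 2 := by
    conv_lhs => rw [hxdec]
    simp only [Matrix.mulVec_add, Matrix.mulVec_smul, add_dotProduct,
      dotProduct_add, smul_dotProduct, dotProduct_smul, smul_eq_mul]
    rw [← hW2def, hAu1w, hcross, h11]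
    ring
  have hQ2 : E.mulVec x ⬝ᵥ x = EW + lam1⁻¹ * cc ^ 2 := by
    conv_lhs => rw [hxdec]
    simp only [Matrix.mulVec_add, Matrix.mulVec_smul, add_dotProduct,
      dotProduct_add, smul_dotProduct, dotProduct_smul, smul_eq_mul]
    rw [← hEWdef, hEu1w, hEwu1, hE11]
    ring
  -- key spectral bound
  have hkey : lam2 * EW ≤ W2 :=
    key_bound A E hA hE lam1 lam2 u1 h1pos h2pos hsimple hmin w hAu1w
  -- sine squared
  have hcc2 : cc ^ 2 ≤ A.mulVec x ⬝ᵥ x := by rw [hP2]; linarith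
  have hsin2 : Real.sin (angleA A u1 x) ^ 2 = W2 / (A.mulVec x ⬝ᵥ x) := by
    have hipux : ipA A u1 x = cc := rfl
    have hipxx : ipA A x x = A.mulVec x ⬝ᵥ x := rfl
    have ht2 : (cc / Real.sqrt (A.mulVec x ⬝ᵥ x)) ^ 2 = cc ^ 2 / (A.mulVec x ⬝ᵥ x) := by
      rw [div_pow, Real.sq_sqrt (le_of_lt hP)]
    have h1t : 0 ≤ 1 - (cc / Real.sqrt (A.mulVec x ⬝ᵥ x)) ^ 2 := by
      rw [ht2]
      have : cc ^ 2 / (A.mulVec x ⬝ᵥ x) ≤ 1 := by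
        rw [div_le_one hP]; exact hcc2
      linarith
    rw [angleA, hu1norm, one_mul, hipux, normA, hipxx, Real.sin_arccos,
      Real.sq_sqrt h1t, ht2]
    rw [eq_div_iff (ne_of_gt hP)]
    field_simp
    linarith [hP2]
  -- rayleigh rewrite
  have hray : 1 - lam1 / rayleigh A E x = (W2 - lam1 * EW) / (A.mulVec x ⬝ᵥ x) := by
    have hPne : W2 + cc ^ 2 ≠ 0 := by rw [← hP2]; exact ne_of_gt hP
    rw [rayleigh, hP2, hQ2, div_div_eq_mul_div]
    field_simp
    ring
  have hδ' : lam2 ≤ δ * (lam2 - lam1) := by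
    rw [ge_iff_le, div_le_iff₀ (by linarith : (0:ℝ) < lam2 - lam1)] at hδ
    exact hδ
  have hδ0 : (0:ℝ) < δ := by nlinarith
  have hδ1 : (1:ℝ) ≤ δ := by nlinarith
  constructor
  · rw [hsin2, hray, div_le_div_iff_of_pos_right hP]
    nlinarith
  · rw [hsin2, hray, ← mul_div_assoc, div_le_div_iff_of_pos_right hP]
    have t1 : 0 ≤ (δ - 1) * (W2 - lam2 * EW) :=
      mul_nonneg (sub_nonneg.mpr hδ1) (sub_nonneg.mpr hkey)
    have t2 : 0 ≤ (δ * (lam2 - lam1) - lam2) * EW :=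
      mul_nonneg (sub_nonneg.mpr hδ') hEW
    have expand : δ * (W2 - lam1 * EW) - W2
        = (δ - 1) * (W2 - lam2 * EW) + (δ * (lam2 - lam1) - lam2) * EW := by ring
    linarith [t1, t2, expand]
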